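/- Entropy production at the quasistatic level: combining the free energy balance with the first law Q = ΔU - W and U = F + β⁻¹S, the exchanged heat satisfies Q = β⁻¹(S₁ - S₀) - γ⁻¹ ∫₀^∞ ∫₀¹ (∂_x 𝛕(r(t,x)))² dx dt; in particular Q ≤ β⁻¹(S₁ - S₀), with equality if and only if ∂_x 𝛕(r(t,x)) = 0 for a.e. (t,x). -/
import Mathlib


open Real MeasureTheory Filter Set

/-- Entropy production: with `Q = ΔU - W`, `U = F + β⁻¹S`, and the
free-energy balance `F₁ - F₀ = W - γ⁻¹∫₀^∞∫₀¹(∂_x𝛕(r(t,x)))² dx dt`, the heat satisfies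
`Q = β⁻¹(S₁ - S₀) - γ⁻¹∫₀^∞∫₀¹(∂_x𝛕(r(t,x)))² dx dt`; in particular `Q ≤ β⁻¹(S₁ - S₀)`,
with equality iff `∂_x𝛕(r(t,x)) = 0` for a.e. `(t,x) ∈ (0,∞)×(0,1)`. -/
theorem entropy_production
    (β γ : ℝ) (hβ : 0 < β) (hγ : 0 < γ)
    (tauOf : ℝ → ℝ) (r : ℝ → ℝ → ℝ)
    (F₀ F₁ U₀ U₁ S₀ S₁ W Q : ℝ)
    (hU0 : U₀ = F₀ + β⁻¹ * S₀) (hU1 : U₁ = F₁ + β⁻¹ * S₁)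
    (hQ : Q = (U₁ - U₀) - W)
    (hDint : Integrable
      (fun p : ℝ × ℝ => (deriv (fun y => tauOf (r p.1 y)) p.2) ^ 2)
      (volume.restrict ((Set.Ioi (0:ℝ)) ×ˢ (Set.Ioo (0:ℝ) 1))))
    (hbal : F₁ - F₀ = W - γ⁻¹ *
      ∫ p in (Set.Ioi (0:ℝ)) ×ˢ (Set.Ioo (0:ℝ) 1),
        (deriv (fun y => tauOf (r p.1 y)) p.2) ^ 2) :
    (Q = β⁻¹ * (S₁ - S₀) - γ⁻¹ *
        ∫ p in (Set.Ioi (0:ℝ)) ×ˢ (Set.Ioo (0:ℝ) 1),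
          (deriv (fun y => tauOf (r p.1 y)) p.2) ^ 2) ∧
    Q ≤ β⁻¹ * (S₁ - S₀) ∧
    (Q = β⁻¹ * (S₁ - S₀) ↔
      (∀ᵐ p ∂(volume.restrict ((Set.Ioi (0:ℝ)) ×ˢ (Set.Ioo (0:ℝ) 1))),
        deriv (fun y => tauOf (r p.1 y)) p.2 = 0)) := by
  set I := ∫ p in (Set.Ioi (0:ℝ)) ×ˢ (Set.Ioo (0:ℝ) 1),
      (deriv (fun y => tauOf (r p.1 y)) p.2) ^ 2 with hI
  have hInn : 0 ≤ I := integral_nonneg fun p => sq_nonneg _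
  have heq : Q = β⁻¹ * (S₁ - S₀) - γ⁻¹ * I := by
    rw [hQ, hU0, hU1]; linarith [hbal]
  refine ⟨heq, ?_, ?_⟩
  · have : 0 ≤ γ⁻¹ * I := mul_nonneg (le_of_lt (inv_pos.mpr hγ)) hInn
    linarith
  · have hiff : Q = β⁻¹ * (S₁ - S₀) ↔ I = 0 := by
      constructor
      · intro h; rw [heq] at h
        have : γ⁻¹ * I = 0 := by linarith
        exact (mul_eq_zero.mp this).resolve_left (by positivity)
      · intro h; rw [heq, h]; ring
    rw [hiff, hI]
    rw [MeasureTheory.integral_eq_zero_iff_of_nonneg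
      (fun p => sq_nonneg _) hDint]
    constructor
    · intro h
      filter_upwards [h] with p hp
      have : (deriv (fun y => tauOf (r p.1 y)) p.2) ^ 2 = 0 := hp
      exact pow_eq_zero_iff (by norm_num) |>.mp this
    · intro h
      filter_upwards [h] with p hp
      simp [hp]
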